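/- Change-of-measure inequality for the change-point model: Assume supp q ⊆ supp p. Let T be a stopping time with respect to the canonical filtration, let ν ≥ 0 and m ≥ 1 be integers, and let c ∈ ℝ. Then P_ν(ν < T < ν + m) ≤ e^{c} · P_∞(T < ν + m) + P_ν( max_{ν ≤ n < ν + m} λ^{(ν)}_n ≥ c ). -/

import Mathlib

open MeasureTheory ProbabilityTheory Real Filter
open scoped ENNReal NNReal

noncomputable section

namespace QCPD

variable {X : Type*}

/-- The measure on `X` induced by a probability mass function `p`. -/
def pmfMeasure [Fintype X] [MeasurableSpace X] (p : X → ℝ) : Measure X :=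
  ∑ x : X, ENNReal.ofReal (p x) • Measure.dirac x

/-- `p` is a probability mass function on the finite type `X`. -/
def IsPMF [Fintype X] (p : X → ℝ) : Prop := (∀ x, 0 ≤ p x) ∧ ∑ x, p x = 1

/-- Under `P`, the coordinates of `Ω = ℕ → X` are independent and the `i`-th
coordinate (representing `X_{i+1}`) has law given by the pmf `r i`.  For i.i.d.
pmfs this characterizes the infinite product measure. -/
def HasLaw [Fintype X] [MeasurableSpace X] (P : Measure (ℕ → X)) (r : ℕ → X → ℝ) : Prop :=
  iIndepFun (fun i (ω : ℕ → X) => ω i) P ∧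
    ∀ i, P.map (fun ω => ω i) = pmfMeasure (r i)

/-- The log-likelihood ratio `log (q x / p x)`, valued in the extended reals,
with the conventions `log 0 = −∞` (and `log ∞ = ∞`). -/
def llr (p q : X → ℝ) (x : X) : EReal :=
  ENNReal.log (ENNReal.ofReal (q x) / ENNReal.ofReal (p x))

/-- `S_n = ∑_{i=1}^n Z_i` where `Z_i = log (q (X_i) / p (X_i))`; the `i`-th
coordinate of `ω` represents `X_{i+1}`. -/
def llrSum (p q : X → ℝ) (n : ℕ) (ω : ℕ → X) : EReal :=
  ∑ i ∈ Finset.range n, llr p q (ω i)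

/-- `T₁ = inf {n ≥ 1 : S_n ≥ h}`, with value `∞` if no such `n` exists. -/
def T1 (p q : X → ℝ) (h : ℝ) (ω : ℕ → X) : ℕ∞ :=
  sInf ((↑) '' {n : ℕ | 1 ≤ n ∧ (h : EReal) ≤ llrSum p q n ω})

/-- Kullback–Leibler divergence `D(q‖p) = ∑_{x ∈ supp q} q x · log (q x / p x)`. -/
def KL [Fintype X] (q p : X → ℝ) : ℝ :=
  ∑ x ∈ Finset.univ.filter (fun x => 0 < q x), q x * Real.log (q x / p x)

/-- The canonical filtration `F_n = σ(X_1, …, X_n)` on `Ω = ℕ → X` (the `i`-th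
coordinate represents `X_{i+1}`). -/
def filt (X : Type*) [MeasurableSpace X] (n : ℕ) : MeasurableSpace (ℕ → X) :=
  MeasurableSpace.comap (fun ω (i : Fin n) => ω i) inferInstance


section Aux

/-- determined by first n coordinates -/
def Det (n : ℕ) (E : Set (ℕ → X)) : Prop :=
  ∀ ω ω' : ℕ → X, (∀ i, i < n → ω i = ω' i) → (ω ∈ E ↔ ω' ∈ E)

def extFun [Nonempty X] (n : ℕ) (f : Fin n → X) : ℕ → X :=
  fun i => if h : i < n then f ⟨i, h⟩ else Classical.arbitrary X

attribute [local instance] Classical.propDecidable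

lemma coe_sum_ereal (s : Finset ℕ) (f : ℕ → ℝ) :
    ((∑ i ∈ s, f i : ℝ) : EReal) = ∑ i ∈ s, (f i : EReal) := by
  induction s using Finset.induction with
  | empty => simp
  | insert a s h ih => rw [Finset.sum_insert h, Finset.sum_insert h, EReal.coe_add, ih]

variable [Fintype X] [Nonempty X] [MeasurableSpace X] [DiscreteMeasurableSpace X]

lemma pmfMeasure_singleton (p : X → ℝ) (x : X) :
    pmfMeasure p {x} = ENNReal.ofReal (p x) := by
  rw [pmfMeasure, Measure.finset_sum_apply]
  rw [Finset.sum_eq_single x]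
  · simp [Measure.smul_apply, Measure.dirac_apply]
  · intro y _ hy
    simp [Measure.smul_apply, Measure.dirac_apply, Set.indicator_of_notMem, hy]
  · simp

lemma hasLaw_cyl {P : Measure (ℕ → X)} {r : ℕ → X → ℝ} (hP : HasLaw P r) (n : ℕ) (ω : ℕ → X) :
    P {ω' | ∀ i : Fin n, ω' (i : ℕ) = ω (i : ℕ)} =
      ∏ i ∈ Finset.range n, ENNReal.ofReal (r i (ω i)) := by
  have heq : {ω' : ℕ → X | ∀ i : Fin n, ω' (i : ℕ) = ω (i : ℕ)} =
      ⋂ i ∈ Finset.range n, (fun ω' : ℕ → X => ω' i) ⁻¹' {ω i} := by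
    ext ω'
    simp only [Set.mem_setOf_eq, Set.mem_iInter, Set.mem_preimage, Set.mem_singleton_iff,
      Finset.mem_range]
    exact ⟨fun h i hi => h ⟨i, hi⟩, fun h i => h i i.isLt⟩
  rw [heq, (iIndepFun_iff_measure_inter_preimage_eq_mul.mp hP.1) (Finset.range n)
      (fun i _ => measurableSet_singleton _)]
  refine Finset.prod_congr rfl fun i _ => ?_
  rw [← Measure.map_apply (measurable_pi_apply i) (measurableSet_singleton _), hP.2 i,
    pmfMeasure_singleton]

lemma det_of_filt {n : ℕ} {E : Set (ℕ → X)} (h : MeasurableSet[filt X n] E) : Det n E := by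
  obtain ⟨S, -, rfl⟩ := h
  intro ω ω' hagree
  have hfe : (fun i : Fin n => ω i) = fun i : Fin n => ω' i :=
    funext fun i => hagree i i.isLt
  simp only [Set.mem_preimage]
  rw [hfe]

lemma cyl_measurable (n : ℕ) (f : Fin n → X) :
    MeasurableSet {ω' : ℕ → X | ∀ i : Fin n, ω' (i : ℕ) = f i} := by
  have : {ω' : ℕ → X | ∀ i : Fin n, ω' (i : ℕ) = f i} =
      ⋂ i : Fin n, (fun ω' : ℕ → X => ω' (i : ℕ)) ⁻¹' {f i} := by
    ext ω'; simp [Set.mem_iInter]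
  rw [this]
  exact MeasurableSet.iInter fun i =>
    (measurable_pi_apply _) (measurableSet_singleton _)

lemma det_decomp {n : ℕ} {E : Set (ℕ → X)} (hE : Det n E) :
    E = ⋃ f ∈ Finset.univ.filter (fun f : Fin n → X => extFun n f ∈ E),
      {ω' : ℕ → X | ∀ i : Fin n, ω' (i : ℕ) = f i} := by
  ext ω
  simp only [Set.mem_iUnion, Finset.mem_filter, Finset.mem_univ, true_and, Set.mem_setOf_eq,
    exists_prop]
  constructor
  · intro hω
    refine ⟨fun i => ω i, ?_, fun i => rfl⟩
    have hag : ∀ i, i < n → ω i = extFun n (fun i : Fin n => ω i) i := by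
      intro i hi; simp [extFun, hi]
    exact (hE ω _ hag).mp hω
  · rintro ⟨f, hf, hcyl⟩
    have hag : ∀ i, i < n → ω i = extFun n f i := by
      intro i hi
      rw [extFun]; rw [dif_pos hi]; exact hcyl ⟨i, hi⟩
    exact (hE ω _ hag).mpr hf

lemma det_measurableSet {n : ℕ} {E : Set (ℕ → X)} (hE : Det n E) : MeasurableSet E := by
  rw [det_decomp hE]
  exact Finset.measurableSet_biUnion _ fun f _ => cyl_measurable n f

lemma det_measure {P : Measure (ℕ → X)} {r : ℕ → X → ℝ} (hP : HasLaw P r)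
    {n : ℕ} {E : Set (ℕ → X)} (hE : Det n E) :
    P E = ∑ f ∈ Finset.univ.filter (fun f : Fin n → X => extFun n f ∈ E),
      ∏ i ∈ Finset.range n, ENNReal.ofReal (r i (extFun n f i)) := by
  conv_lhs => rw [det_decomp hE]
  rw [measure_biUnion_finset ?hdisj (fun f _ => cyl_measurable n f)]
  case hdisj =>
    intro f _ g _ hfg
    refine Set.disjoint_left.mpr fun ω hωf hωg => hfg ?_
    exact funext fun i => (hωf i).symm.trans (hωg i)
  refine Finset.sum_congr rfl fun f hf => ?_
  have hset : {ω' : ℕ → X | ∀ i : Fin n, ω' (i : ℕ) = f i} =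
      {ω' : ℕ → X | ∀ i : Fin n, ω' (i : ℕ) = extFun n f (i : ℕ)} := by
    ext ω'
    refine forall_congr' fun i => ?_
    rw [extFun, dif_pos i.isLt]
  rw [hset, hasLaw_cyl hP n (extFun n f)]

set_option linter.unusedSectionVars false

lemma pointwise_key {p q : X → ℝ} (hp : IsPMF p) (hq : IsPMF q)
    (hsupp : ∀ x, 0 < q x → 0 < p x) (ν n : ℕ) (hνn : ν ≤ n) (c : ℝ) (ω : ℕ → X)
    (hc : ¬ ((c : EReal) ≤ ∑ i ∈ Finset.Ico ν n, llr p q (ω i))) :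
    ∏ i ∈ Finset.range n, ENNReal.ofReal ((if i < ν then p else q) (ω i)) ≤
      ENNReal.ofReal (Real.exp c) * ∏ i ∈ Finset.range n, ENNReal.ofReal (p (ω i)) := by
  by_cases hpos : ∀ i ∈ Finset.Ico ν n, 0 < q (ω i)
  · have hppos : ∀ i ∈ Finset.Ico ν n, 0 < p (ω i) := fun i hi => hsupp _ (hpos i hi)
    have hterm : ∀ i ∈ Finset.Ico ν n,
        llr p q (ω i) = ((Real.log (q (ω i) / p (ω i)) : ℝ) : EReal) := by
      intro i hi
      rw [llr, ← ENNReal.ofReal_div_of_pos (hppos i hi), ENNReal.log_ofReal, if_neg]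
      push_neg
      exact div_pos (hpos i hi) (hppos i hi)
    set L := ∑ i ∈ Finset.Ico ν n, Real.log (q (ω i) / p (ω i)) with hL
    have hsum : (∑ i ∈ Finset.Ico ν n, llr p q (ω i)) = (L : EReal) := by
      rw [Finset.sum_congr rfl hterm, hL, coe_sum_ereal]
    rw [hsum] at hc
    have hLc : L ≤ c := by
      have := not_le.mp hc
      exact_mod_cast this.le
    -- split products
    have hsplitF : ∀ g : ℕ → ℝ≥0∞,
        ∏ i ∈ Finset.range n, g i =
          (∏ i ∈ Finset.Ico 0 ν, g i) * ∏ i ∈ Finset.Ico ν n, g i := by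
      intro g
      rw [Finset.prod_Ico_consecutive g (Nat.zero_le ν) hνn, Finset.range_eq_Ico]
    rw [hsplitF, hsplitF]
    have h1 : ∀ i ∈ Finset.Ico 0 ν,
        ENNReal.ofReal ((if i < ν then p else q) (ω i)) = ENNReal.ofReal (p (ω i)) := by
      intro i hi
      rw [if_pos (Finset.mem_Ico.mp hi).2]
    have h2 : ∀ i ∈ Finset.Ico ν n,
        ENNReal.ofReal ((if i < ν then p else q) (ω i)) = ENNReal.ofReal (q (ω i)) := by
      intro i hi
      rw [if_neg (Nat.not_lt.mpr (Finset.mem_Ico.mp hi).1)]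
    rw [Finset.prod_congr rfl h1, Finset.prod_congr rfl h2]
    have key2 : ∏ i ∈ Finset.Ico ν n, ENNReal.ofReal (q (ω i)) ≤
        ENNReal.ofReal (Real.exp c) * ∏ i ∈ Finset.Ico ν n, ENNReal.ofReal (p (ω i)) := by
      have hmul : ∀ i ∈ Finset.Ico ν n,
          ENNReal.ofReal (q (ω i)) =
            ENNReal.ofReal (p (ω i)) * ENNReal.ofReal (q (ω i) / p (ω i)) := by
        intro i hi
        rw [← ENNReal.ofReal_mul (hppos i hi).le]
        congr 1
        rw [mul_comm]
        exact (div_mul_cancel₀ _ (hppos i hi).ne').symm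
      rw [Finset.prod_congr rfl hmul, Finset.prod_mul_distrib,
        ← ENNReal.ofReal_prod_of_nonneg (fun i hi => div_nonneg (hq.1 _) (hppos i hi).le)]
      have hprod : ∏ i ∈ Finset.Ico ν n, (q (ω i) / p (ω i)) = Real.exp L := by
        rw [hL, Real.exp_sum]
        exact Finset.prod_congr rfl fun i hi =>
          (Real.exp_log (div_pos (hpos i hi) (hppos i hi))).symm
      rw [hprod, mul_comm]
      exact mul_le_mul_left (ENNReal.ofReal_le_ofReal (Real.exp_le_exp.mpr hLc)) _
    calc (∏ i ∈ Finset.Ico 0 ν, ENNReal.ofReal (p (ω i))) *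
          ∏ i ∈ Finset.Ico ν n, ENNReal.ofReal (q (ω i))
        ≤ (∏ i ∈ Finset.Ico 0 ν, ENNReal.ofReal (p (ω i))) *
            (ENNReal.ofReal (Real.exp c) * ∏ i ∈ Finset.Ico ν n, ENNReal.ofReal (p (ω i))) :=
          mul_le_mul_right key2 _
      _ = ENNReal.ofReal (Real.exp c) * ((∏ i ∈ Finset.Ico 0 ν, ENNReal.ofReal (p (ω i))) *
            ∏ i ∈ Finset.Ico ν n, ENNReal.ofReal (p (ω i))) := by ring
  · push_neg at hpos
    obtain ⟨i, hi, hqi⟩ := hpos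
    have hq0 : q (ω i) = 0 := le_antisymm hqi (hq.1 _)
    have hterm0 : ENNReal.ofReal ((if i < ν then p else q) (ω i)) = 0 := by
      rw [if_neg (Nat.not_lt.mpr (Finset.mem_Ico.mp hi).1)]
      exact ENNReal.ofReal_eq_zero.mpr hq0.le
    rw [Finset.prod_eq_zero (Finset.mem_range.mpr (Finset.mem_Ico.mp hi).2) hterm0]
    exact zero_le

lemma change_lemma {p q : X → ℝ} (hp : IsPMF p) (hq : IsPMF q)
    (hsupp : ∀ x, 0 < q x → 0 < p x)
    {Pinf : Measure (ℕ → X)} (hPinf : HasLaw Pinf (fun _ => p))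
    {Pν : Measure (ℕ → X)} (ν : ℕ) (hPν : HasLaw Pν (fun i => if i < ν then p else q))
    (n : ℕ) (hνn : ν ≤ n) (c : ℝ) {E : Set (ℕ → X)} (hdet : Det n E)
    (hsub : ∀ ω ∈ E, ¬ ((c : EReal) ≤ ∑ i ∈ Finset.Ico ν n, llr p q (ω i))) :
    Pν E ≤ ENNReal.ofReal (Real.exp c) * Pinf E := by
  rw [det_measure hPν hdet, det_measure hPinf hdet, Finset.mul_sum]
  refine Finset.sum_le_sum fun f hf => ?_
  have hfE : extFun n f ∈ E := (Finset.mem_filter.mp hf).2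
  exact pointwise_key hp hq hsupp ν n hνn c (extFun n f) (hsub _ hfE)

lemma enat_exists {a : ℕ∞} (h : a ≠ ⊤) : ∃ k : ℕ, a = (k : ℕ∞) := by
  lift a to ℕ using h
  exact ⟨a, rfl⟩


end Aux

/-- **Change-of-measure inequality for the change-point model.** Assume
`supp q ⊆ supp p`.  For a stopping time `T` of the canonical filtration,
integers `ν ≥ 0`, `m ≥ 1` and `c ∈ ℝ`,
`P_ν(ν < T < ν + m) ≤ e^c · P_∞(T < ν + m) + P_ν(max_{ν ≤ n < ν + m} λ^{(ν)}_n ≥ c)`,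
where `λ^{(ν)}_n = ∑_{i=ν+1}^n log (q (X_i) / p (X_i))`. -/
theorem change_of_measure_inequality
    [Fintype X] [Nonempty X] [MeasurableSpace X] [DiscreteMeasurableSpace X]
    (p q : X → ℝ) (hp : IsPMF p) (hq : IsPMF q)
    (hsupp : ∀ x, 0 < q x → 0 < p x)
    (Pinf : Measure (ℕ → X)) [IsProbabilityMeasure Pinf]
    (hPinf : HasLaw Pinf (fun _ => p))
    (Pc : ℕ → Measure (ℕ → X)) (hPcprob : ∀ ν, IsProbabilityMeasure (Pc ν))
    (hPc : ∀ ν, HasLaw (Pc ν) (fun i => if i < ν then p else q))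
    (T : (ℕ → X) → ℕ∞)
    (hstop : ∀ n : ℕ, MeasurableSet[filt X n] {ω | T ω ≤ (n : ℕ∞)})
    (ν m : ℕ) (hm : 1 ≤ m) (c : ℝ) :
    Pc ν {ω | (ν : ℕ∞) < T ω ∧ T ω < ((ν + m : ℕ) : ℕ∞)} ≤
      ENNReal.ofReal (Real.exp c) * Pinf {ω | T ω < ((ν + m : ℕ) : ℕ∞)} +
      Pc ν {ω | ∃ n : ℕ, ν ≤ n ∧ n < ν + m ∧
        (c : EReal) ≤ ∑ i ∈ Finset.Ico ν n, llr p q (ω i)} := by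
  classical
  set A := {ω : ℕ → X | (ν : ℕ∞) < T ω ∧ T ω < ((ν + m : ℕ) : ℕ∞)} with hA
  set C := {ω : ℕ → X | ∃ n : ℕ, ν ≤ n ∧ n < ν + m ∧
    (c : EReal) ≤ ∑ i ∈ Finset.Ico ν n, llr p q (ω i)} with hC
  set E : ℕ → Set (ℕ → X) := fun k =>
    {ω | T ω = (k : ℕ∞)} ∩
      {ω | ¬ ((c : EReal) ≤ ∑ i ∈ Finset.Ico ν k, llr p q (ω i))} with hE
  have hdetle : ∀ j : ℕ, Det j {ω : ℕ → X | T ω ≤ (j : ℕ∞)} :=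
    fun j => det_of_filt (hstop j)
  -- characterization of T = k
  have hTeqiff : ∀ (k : ℕ), 1 ≤ k → ∀ σ : ℕ → X,
      T σ = (k : ℕ∞) ↔ (T σ ≤ (k : ℕ∞) ∧ ¬ T σ ≤ ((k - 1 : ℕ) : ℕ∞)) := by
    intro k hk σ
    constructor
    · intro h
      rw [h]
      refine ⟨le_refl _, ?_⟩
      rw [Nat.cast_le]
      omega
    · rintro ⟨hle, hgt⟩
      have hne : T σ ≠ ⊤ := by
        intro h
        rw [h] at hle
        exact absurd hle (by simp)
      obtain ⟨j, hj⟩ := enat_exists hne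
      rw [hj] at hle hgt ⊢
      have hj1 : j ≤ k := by exact_mod_cast hle
      have hj2 : ¬ j ≤ k - 1 := fun h => hgt (by exact_mod_cast h)
      have : j = k := by omega
      exact_mod_cast this
  have hdetE : ∀ k, ν < k → Det k (E k) := by
    intro k hk ω ω' hag
    have h1 := hdetle k ω ω' hag
    have h2 := hdetle (k - 1) ω ω' (fun i hi => hag i (by omega))
    have hsumeq : (∑ i ∈ Finset.Ico ν k, llr p q (ω i)) =
        ∑ i ∈ Finset.Ico ν k, llr p q (ω' i) :=
      Finset.sum_congr rfl fun i hi => by rw [hag i (Finset.mem_Ico.mp hi).2]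
    simp only [hE, Set.mem_inter_iff, Set.mem_setOf_eq]
    rw [hTeqiff k (by omega) ω, hTeqiff k (by omega) ω', hsumeq]
    simp only [Set.mem_setOf_eq] at h1 h2
    rw [h1, h2]
  have hsubAC : A \ C ⊆ ⋃ k ∈ Finset.Ico (ν + 1) (ν + m), E k := by
    rintro ω ⟨⟨hν, hm'⟩, hnC⟩
    have hne : T ω ≠ ⊤ := by
      intro h
      rw [h] at hm'
      exact absurd hm' (by simp)
    obtain ⟨k, hk⟩ := enat_exists hne
    have hk1 : ν < k := by rw [hk] at hν; exact_mod_cast hν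
    have hk2 : k < ν + m := by rw [hk] at hm'; exact_mod_cast hm'
    simp only [Set.mem_iUnion, Finset.mem_Ico, exists_prop]
    refine ⟨k, ⟨by omega, hk2⟩, hk, fun hcle => hnC ⟨k, by omega, hk2, hcle⟩⟩
  have hmeasE : ∀ k ∈ Finset.Ico (ν + 1) (ν + m), MeasurableSet (E k) := fun k hk =>
    det_measurableSet (hdetE k (by have := (Finset.mem_Ico.mp hk).1; omega))
  have hdisjE : (↑(Finset.Ico (ν + 1) (ν + m)) : Set ℕ).PairwiseDisjoint E := by
    intro a _ b _ hab
    refine Set.disjoint_left.mpr fun ω hωa hωb => hab ?_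
    have ha : T ω = (a : ℕ∞) := hωa.1
    have hb : T ω = (b : ℕ∞) := hωb.1
    exact_mod_cast ha.symm.trans hb
  calc Pc ν A ≤ Pc ν (A ∩ C) + Pc ν (A \ C) := measure_le_inter_add_diff _ _ _
    _ ≤ Pc ν C + ∑ k ∈ Finset.Ico (ν + 1) (ν + m), Pc ν (E k) := by
        refine add_le_add (measure_mono Set.inter_subset_right) ?_
        exact (measure_mono hsubAC).trans (measure_biUnion_finset_le _ _)
    _ ≤ Pc ν C + ∑ k ∈ Finset.Ico (ν + 1) (ν + m),
          ENNReal.ofReal (Real.exp c) * Pinf (E k) := by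
        refine add_le_add_right (Finset.sum_le_sum fun k hk => ?_) _
        have hνk1 : ν + 1 ≤ k := (Finset.mem_Ico.mp hk).1
        have hνk : ν ≤ k := by omega
        exact change_lemma hp hq hsupp hPinf ν (hPc ν) k hνk c
          (hdetE k (by omega)) (fun ω hω => hω.2)
    _ = Pc ν C + ENNReal.ofReal (Real.exp c) *
          Pinf (⋃ k ∈ Finset.Ico (ν + 1) (ν + m), E k) := by
        rw [← Finset.mul_sum, measure_biUnion_finset hdisjE hmeasE]
    _ ≤ Pc ν C + ENNReal.ofReal (Real.exp c) * Pinf {ω | T ω < ((ν + m : ℕ) : ℕ∞)} := by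
        refine add_le_add_right (mul_le_mul_right (measure_mono ?_) _) _
        intro ω hω
        simp only [Set.mem_iUnion, Finset.mem_Ico, exists_prop] at hω
        obtain ⟨k, ⟨hk1, hk2⟩, hT, -⟩ := hω
        have : T ω = (k : ℕ∞) := hT
        simp only [Set.mem_setOf_eq]
        rw [this]
        exact_mod_cast hk2
    _ = ENNReal.ofReal (Real.exp c) * Pinf {ω | T ω < ((ν + m : ℕ) : ℕ∞)} + Pc ν C :=
        add_comm _ _

end QCPD
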